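/- The Lebesgue integral extends the Riemann integral: let a < b and let f : ℝ → ℝ be Riemann integrable on [a,b] with Riemann integral I ∈ ℝ. Then f is Lebesgue integrable on [a,b] (IntegrableOn f (Icc a b) with respect to volume) and its Lebesgue integral over [a,b] equals I: ∫ x in Icc a b, f x ∂volume = I. -/

import Mathlib

open Set MeasureTheory

/-- `f` is Riemann integrable on `[a,b]` with integral `I`: for every `ε > 0` there is
`δ > 0` such that every tagged partition of `[a,b]` of mesh less than `δ` has Riemann
sum within `ε` of `I`. -/
def RiemannIntegralOn (f : ℝ → ℝ) (a b I : ℝ) : Prop :=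
  ∀ ε : ℝ, 0 < ε → ∃ δ : ℝ, 0 < δ ∧
    ∀ (N : ℕ) (x t : ℕ → ℝ),
      x 0 = a → x N = b →
      (∀ i < N, x i < x (i + 1)) →
      (∀ i < N, x (i + 1) - x i < δ) →
      (∀ i < N, t i ∈ Icc (x i) (x (i + 1))) →
      |(∑ i ∈ Finset.range N, f (t i) * (x (i + 1) - x i)) - I| < ε

/-- locate a point in a uniform partition (half-open version) -/
lemma RE_locate {a Δ : ℝ} (hΔ : 0 < Δ) {n : ℕ} {y : ℝ} (hy : a ≤ y) (hyb : y < a + n * Δ) :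
    ∃ i : ℕ, i < n ∧ a + i * Δ ≤ y ∧ y < a + (i + 1) * Δ := by
  have h0 : (0:ℝ) ≤ (y - a) / Δ := div_nonneg (by linarith) hΔ.le
  have hfl0 : 0 ≤ ⌊(y - a) / Δ⌋ := Int.floor_nonneg.2 h0
  set j : ℕ := ⌊(y - a) / Δ⌋.toNat with hj
  have hjc : (j : ℝ) = (⌊(y - a) / Δ⌋ : ℝ) := by
    rw [hj]; exact_mod_cast Int.toNat_of_nonneg hfl0
  have h1 : (j : ℝ) ≤ (y - a) / Δ := by rw [hjc]; exact Int.floor_le _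
  have h2 : (y - a) / Δ < (j : ℝ) + 1 := by rw [hjc]; exact Int.lt_floor_add_one _
  have hdn : (y - a) / Δ < (n : ℝ) := by
    rw [div_lt_iff₀ hΔ]; linarith
  refine ⟨j, ?_, ?_, ?_⟩
  · exact_mod_cast h1.trans_lt hdn
  · have := (le_div_iff₀ hΔ).1 h1
    linarith
  · have := (div_lt_iff₀ hΔ).1 h2
    linarith

lemma RE_step_eval {x : ℕ → ℝ} (hx : ∀ i : ℕ, x i < x (i + 1)) {n i : ℕ} (hi : i < n) {y : ℝ}
    (hy : y ∈ Ico (x i) (x (i + 1))) (c : ℕ → ℝ) :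
    (∑ j ∈ Finset.range n, (Ico (x j) (x (j + 1))).indicator (fun _ => c j) y) = c i := by
  have hsm : StrictMono x := strictMono_nat_of_lt_succ hx
  rw [Finset.sum_eq_single_of_mem i (Finset.mem_range.2 hi)]
  · exact indicator_of_mem hy _
  · intro j _ hji
    apply indicator_of_notMem
    intro hyj
    rcases lt_or_gt_of_ne hji with h | h
    · have h2 : x (j + 1) ≤ x i := hsm.monotone (by omega)
      exact absurd (hyj.2.trans_le (h2.trans hy.1)) (lt_irrefl y)
    · have h2 : x (i + 1) ≤ x j := hsm.monotone (by omega)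
      exact absurd (hy.2.trans_le (h2.trans hyj.1)) (lt_irrefl y)

lemma RE_step_eval0 {x : ℕ → ℝ} {n : ℕ} {y : ℝ}
    (hy : ∀ i < n, y ∉ Ico (x i) (x (i + 1))) (c : ℕ → ℝ) :
    (∑ j ∈ Finset.range n, (Ico (x j) (x (j + 1))).indicator (fun _ => c j) y) = 0 :=
  Finset.sum_eq_zero fun j hj => indicator_of_notMem (hy j (Finset.mem_range.1 hj)) _


lemma RE_locate_Icc {a Δ : ℝ} (hΔ : 0 < Δ) {n : ℕ} (hn : 0 < n) {y : ℝ}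
    (hy : y ∈ Icc a (a + n * Δ)) :
    ∃ i : ℕ, i < n ∧ y ∈ Icc (a + i * Δ) (a + (i + 1) * Δ) := by
  rcases eq_or_lt_of_le hy.2 with h | h
  · obtain ⟨m, rfl⟩ := Nat.exists_eq_succ_of_ne_zero hn.ne'
    refine ⟨m, Nat.lt_succ_self m, ?_, ?_⟩
    · push_cast [h]; nlinarith
    · push_cast [h]; push_cast; linarith
  · obtain ⟨i, hi, h1, h2⟩ := RE_locate hΔ hy.1 h
    exact ⟨i, hi, h1, h2.le⟩

lemma RE_bound {a b I : ℝ} {f : ℝ → ℝ} (hab : a < b) (hf : RiemannIntegralOn f a b I) :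
    ∃ M : ℝ, 0 < M ∧ ∀ y ∈ Icc a b, |f y| ≤ M := by
  obtain ⟨δ, hδ, H⟩ := hf 1 one_pos
  obtain ⟨n, hn⟩ := exists_nat_gt ((b - a) / δ)
  have hn0 : 0 < n := by
    have h : (0:ℝ) < (b - a) / δ := div_pos (by linarith) hδ
    by_contra hc
    push_neg at hc
    interval_cases n
    simp at hn
    linarith
  have hn0' : (0:ℝ) < n := by exact_mod_cast hn0
  set Δ : ℝ := (b - a) / n with hΔdef
  have hΔ : 0 < Δ := div_pos (by linarith) hn0'
  set x : ℕ → ℝ := fun i => a + i * Δ with hxdef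
  have hx0 : x 0 = a := by simp [hxdef]
  have hxn : x n = b := by
    simp only [hxdef, hΔdef]; field_simp; ring
  have hstep : ∀ i : ℕ, x (i + 1) - x i = Δ := by
    intro i; simp only [hxdef]; push_cast; ring
  have hmono : ∀ i < n, x i < x (i + 1) := fun i _ => by
    have := hstep i; linarith
  have hmesh : ∀ i < n, x (i + 1) - x i < δ := by
    intro i _
    rw [hstep]
    rw [hΔdef, div_lt_iff₀ hn0']
    rw [div_lt_iff₀ hδ] at hn
    linarith
  have htag : ∀ i < n, x i ∈ Icc (x i) (x (i + 1)) := fun i hi =>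
    ⟨le_refl _, (hmono i hi).le⟩
  have key : ∀ i < n, ∀ s ∈ Icc (x i) (x (i + 1)), |f s| ≤ |f (x i)| + 2 / Δ := by
    intro i hi s hs
    set t : ℕ → ℝ := fun j => x j with htdef
    set t' : ℕ → ℝ := Function.update t i s with ht'def
    have htag' : ∀ j < n, t' j ∈ Icc (x j) (x (j + 1)) := by
      intro j hj
      rcases eq_or_ne j i with rfl | hne
      · simpa [ht'def] using hs
      · simpa [ht'def, htdef, Function.update_of_ne hne] using htag j hj
    have h1 := H n x t hx0 hxn hmono hmesh (fun j hj => htag j hj)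
    have h2 := H n x t' hx0 hxn hmono hmesh htag'
    have hdiff : (∑ j ∈ Finset.range n, f (t' j) * (x (j + 1) - x j))
        - (∑ j ∈ Finset.range n, f (t j) * (x (j + 1) - x j))
        = (f s - f (x i)) * Δ := by
      rw [← Finset.sum_sub_distrib]
      rw [Finset.sum_eq_single_of_mem i (Finset.mem_range.2 hi)]
      · simp only [ht'def, Function.update_self, htdef, hstep i]; ring
      · intro j _ hji
        simp [ht'def, Function.update_of_ne hji]
    have habs : |f s - f (x i)| * Δ < 2 := by
      rw [← abs_of_pos hΔ, ← abs_mul, ← hdiff]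
      calc |_| ≤ |(∑ j ∈ Finset.range n, f (t' j) * (x (j + 1) - x j)) - I|
          + |(∑ j ∈ Finset.range n, f (t j) * (x (j + 1) - x j)) - I| := by
            rw [show (∑ j ∈ Finset.range n, f (t' j) * (x (j + 1) - x j))
                - (∑ j ∈ Finset.range n, f (t j) * (x (j + 1) - x j))
                = ((∑ j ∈ Finset.range n, f (t' j) * (x (j + 1) - x j)) - I)
                - ((∑ j ∈ Finset.range n, f (t j) * (x (j + 1) - x j)) - I) by ring]
            exact abs_sub _ _
        _ < 2 := by linarith
    have h3 : |f s - f (x i)| < 2 / Δ := by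
      rw [lt_div_iff₀ hΔ]; linarith
    calc |f s| ≤ |f s - f (x i)| + |f (x i)| := by
          have := abs_sub_abs_le_abs_sub (f s) (f (x i)); linarith [abs_nonneg (f (x i))]
      _ ≤ |f (x i)| + 2 / Δ := by linarith
  refine ⟨(∑ i ∈ Finset.range n, |f (x i)|) + 2 / Δ + 1, ?_, ?_⟩
  · have : (0:ℝ) ≤ ∑ i ∈ Finset.range n, |f (x i)| :=
      Finset.sum_nonneg fun _ _ => abs_nonneg _
    have : (0:ℝ) < 2 / Δ := by positivity
    positivity
  · intro y hy
    have hb : a + (n:ℝ) * Δ = b := hxn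
    have hy' : y ∈ Icc a (a + n * Δ) := by rw [hb]; exact hy
    obtain ⟨i, hi, hyi⟩ := RE_locate_Icc hΔ hn0 hy'
    have := key i hi y (by simpa [hxdef] using hyi)
    have hsingle : |f (x i)| ≤ ∑ j ∈ Finset.range n, |f (x j)| :=
      Finset.single_le_sum (fun j _ => abs_nonneg (f (x j))) (Finset.mem_range.2 hi)
    linarith

lemma RE_approx {a b I M : ℝ} {f : ℝ → ℝ} (hab : a < b) (hf : RiemannIntegralOn f a b I)
    (hM : 0 < M) (hMb : ∀ y ∈ Icc a b, |f y| ≤ M) {ε : ℝ} (hε : 0 < ε) :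
    ∃ L U : ℝ → ℝ, Measurable L ∧ Measurable U ∧
      (∀ y, |L y| ≤ M) ∧ (∀ y, |U y| ≤ M) ∧
      (∀ y ∈ Ico a b, L y ≤ f y ∧ f y ≤ U y) ∧
      (∀ y, L y ≤ U y) ∧
      (∫ y in Icc a b, (U y - L y)) ≤ 2 * ε ∧
      |(∫ y in Icc a b, L y) - I| ≤ ε := by
  obtain ⟨δ, hδ, H⟩ := hf ε hε
  obtain ⟨n, hn⟩ := exists_nat_gt ((b - a) / δ)
  have hn0 : 0 < n := by
    have h : (0:ℝ) < (b - a) / δ := div_pos (by linarith) hδ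
    by_contra hc
    push_neg at hc
    interval_cases n
    simp at hn
    linarith
  have hn0' : (0:ℝ) < n := by exact_mod_cast hn0
  set Δ : ℝ := (b - a) / n with hΔdef
  have hΔ : 0 < Δ := div_pos (by linarith) hn0'
  set x : ℕ → ℝ := fun i => a + i * Δ with hxdef
  have hx0 : x 0 = a := by simp [hxdef]
  have hxn : x n = b := by simp only [hxdef, hΔdef]; field_simp; ring
  have hnΔ : (n:ℝ) * Δ = b - a := by rw [hΔdef]; field_simp
  have hstep : ∀ i : ℕ, x (i + 1) - x i = Δ := by
    intro i; simp only [hxdef]; push_cast; ring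
  have hmono : ∀ i < n, x i < x (i + 1) := fun i _ => by have := hstep i; linarith
  have hmesh : ∀ i < n, x (i + 1) - x i < δ := by
    intro i _
    rw [hstep, hΔdef, div_lt_iff₀ hn0']
    rw [div_lt_iff₀ hδ] at hn
    linarith
  have hsub : ∀ i < n, Icc (x i) (x (i + 1)) ⊆ Icc a b := by
    intro i hi y hy
    have h1 : a ≤ x i := by
      simp only [hxdef]; nlinarith [Nat.cast_nonneg (α := ℝ) i, hΔ.le]
    have h2 : x (i + 1) ≤ b := by
      rw [← hxn]
      simp only [hxdef]
      have : ((i:ℝ) + 1) ≤ n := by exact_mod_cast hi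
      push_cast
      nlinarith
    exact ⟨h1.trans hy.1, hy.2.trans h2⟩
  have hne : ∀ i < n, (f '' Icc (x i) (x (i + 1))).Nonempty := fun i hi =>
    ⟨f (x i), mem_image_of_mem f ⟨le_refl _, (hmono i hi).le⟩⟩
  have hbddA : ∀ i < n, BddAbove (f '' Icc (x i) (x (i + 1))) := by
    rintro i hi
    exact ⟨M, by rintro z ⟨w, hw, rfl⟩; exact (abs_le.1 (hMb w (hsub i hi hw))).2⟩
  have hbddB : ∀ i < n, BddBelow (f '' Icc (x i) (x (i + 1))) := by
    rintro i hi
    exact ⟨-M, by rintro z ⟨w, hw, rfl⟩; exact (abs_le.1 (hMb w (hsub i hi hw))).1⟩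
  set Su : ℕ → ℝ := fun i => sSup (f '' Icc (x i) (x (i + 1))) with hSudef
  set sl : ℕ → ℝ := fun i => sInf (f '' Icc (x i) (x (i + 1))) with hsldef
  have hfle : ∀ i < n, ∀ y ∈ Icc (x i) (x (i + 1)), f y ≤ Su i := fun i hi y hy =>
    le_csSup (hbddA i hi) (mem_image_of_mem f hy)
  have hfge : ∀ i < n, ∀ y ∈ Icc (x i) (x (i + 1)), sl i ≤ f y := fun i hi y hy =>
    csInf_le (hbddB i hi) (mem_image_of_mem f hy)
  have hSuM : ∀ i < n, Su i ≤ M := fun i hi =>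
    csSup_le (hne i hi) (by rintro z ⟨w, hw, rfl⟩; exact (abs_le.1 (hMb w (hsub i hi hw))).2)
  have hslM : ∀ i < n, -M ≤ sl i := fun i hi =>
    le_csInf (hne i hi) (by rintro z ⟨w, hw, rfl⟩; exact (abs_le.1 (hMb w (hsub i hi hw))).1)
  have hslSu : ∀ i < n, sl i ≤ Su i := fun i hi =>
    (hfge i hi (x i) ⟨le_refl _, (hmono i hi).le⟩).trans
      (hfle i hi (x i) ⟨le_refl _, (hmono i hi).le⟩)
  have hslM' : ∀ i < n, sl i ≤ M := fun i hi => (hslSu i hi).trans (hSuM i hi)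
  have hSuM' : ∀ i < n, -M ≤ Su i := fun i hi => (hslM i hi).trans (hslSu i hi)
  set L : ℝ → ℝ := fun y =>
    ∑ i ∈ Finset.range n, (Ico (x i) (x (i + 1))).indicator (fun _ => sl i) y with hLdef
  set U : ℝ → ℝ := fun y =>
    ∑ i ∈ Finset.range n, (Ico (x i) (x (i + 1))).indicator (fun _ => Su i) y with hUdef
  have hmL : Measurable L :=
    Finset.measurable_sum _ fun i _ => measurable_const.indicator measurableSet_Ico
  have hmU : Measurable U :=
    Finset.measurable_sum _ fun i _ => measurable_const.indicator measurableSet_Ico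
  -- evaluation
  have hmono' : ∀ i : ℕ, x i < x (i + 1) := fun i => by have := hstep i; linarith
  have hevalL : ∀ i < n, ∀ y ∈ Ico (x i) (x (i + 1)), L y = sl i := by
    intro i hi y hy
    exact RE_step_eval hmono' hi hy sl
  have hevalU : ∀ i < n, ∀ y ∈ Ico (x i) (x (i + 1)), U y = Su i := by
    intro i hi y hy
    exact RE_step_eval hmono' hi hy Su
  have hcases : ∀ y : ℝ, (∃ i, i < n ∧ y ∈ Ico (x i) (x (i + 1))) ∨ (L y = 0 ∧ U y = 0) := by
    intro y
    by_cases h : ∃ i, i < n ∧ y ∈ Ico (x i) (x (i + 1))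
    · exact Or.inl h
    · push_neg at h
      exact Or.inr ⟨RE_step_eval0 (fun i hi => h i hi) sl, RE_step_eval0 (fun i hi => h i hi) Su⟩
  have hLb : ∀ y, |L y| ≤ M := by
    intro y
    rcases hcases y with ⟨i, hi, hy⟩ | ⟨h0, _⟩
    · rw [hevalL i hi y hy]; exact abs_le.2 ⟨hslM i hi, hslM' i hi⟩
    · rw [h0]; simpa using hM.le
  have hUb : ∀ y, |U y| ≤ M := by
    intro y
    rcases hcases y with ⟨i, hi, hy⟩ | ⟨_, h0⟩
    · rw [hevalU i hi y hy]; exact abs_le.2 ⟨hSuM' i hi, hSuM i hi⟩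
    · rw [h0]; simpa using hM.le
  have hLU : ∀ y, L y ≤ U y := by
    intro y
    rcases hcases y with ⟨i, hi, hy⟩ | ⟨h0, h0'⟩
    · rw [hevalL i hi y hy, hevalU i hi y hy]; exact hslSu i hi
    · rw [h0, h0']
  have hsand : ∀ y ∈ Ico a b, L y ≤ f y ∧ f y ≤ U y := by
    intro y hy
    have hyb : y < a + n * Δ := by
      have : a + (n:ℝ) * Δ = b := by linarith [hnΔ]
      rw [this]; exact hy.2
    obtain ⟨i, hi, h1, h2⟩ := RE_locate hΔ hy.1 hyb
    have hx1 : x i = a + i * Δ := rfl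
    have hx2 : x (i + 1) = a + ((i:ℝ) + 1) * Δ := by simp only [hxdef]; push_cast; ring
    have hyi : y ∈ Ico (x i) (x (i + 1)) := by rw [hx1, hx2]; exact ⟨h1, h2⟩
    have hyi' : y ∈ Icc (x i) (x (i + 1)) := by rw [hx1, hx2]; exact ⟨h1, h2.le⟩
    rw [hevalL i hi y hyi, hevalU i hi y hyi]
    exact ⟨hfge i hi y hyi', hfle i hi y hyi'⟩
  -- integrals of step functions
  have hIcc_fin : volume (Icc a b) < ⊤ := by
    rw [Real.volume_Icc]; exact ENNReal.ofReal_lt_top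
  have hstepint : ∀ c : ℕ → ℝ,
      (∫ y in Icc a b,
        ∑ i ∈ Finset.range n, (Ico (x i) (x (i + 1))).indicator (fun _ => c i) y)
      = ∑ i ∈ Finset.range n, c i * Δ := by
    intro c
    rw [integral_finset_sum]
    · refine Finset.sum_congr rfl fun i hi => ?_
      have hi' := Finset.mem_range.1 hi
      rw [setIntegral_indicator measurableSet_Ico]
      have hinter : Ico (x i) (x (i + 1)) ∩ Icc a b = Ico (x i) (x (i + 1)) :=
        inter_eq_left.2 ((Ico_subset_Icc_self).trans (hsub i hi'))
      rw [inter_comm, hinter, setIntegral_const]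
      rw [measureReal_def, Real.volume_Ico, hstep i, ENNReal.toReal_ofReal hΔ.le, smul_eq_mul]
      ring
    · intro i _
      exact (integrableOn_const hIcc_fin.ne).indicator measurableSet_Ico
  have hintL : (∫ y in Icc a b, L y) = ∑ i ∈ Finset.range n, sl i * Δ := hstepint sl
  have hintU : (∫ y in Icc a b, U y) = ∑ i ∈ Finset.range n, Su i * Δ := hstepint Su
  have hintegL : IntegrableOn L (Icc a b) volume :=
    ⟨hmL.aestronglyMeasurable, HasFiniteIntegral.of_bounded (C := M)
      (Filter.Eventually.of_forall fun y => by rw [Real.norm_eq_abs]; exact hLb y)⟩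
  have hintegU : IntegrableOn U (Icc a b) volume :=
    ⟨hmU.aestronglyMeasurable, HasFiniteIntegral.of_bounded (C := M)
      (Filter.Eventually.of_forall fun y => by rw [Real.norm_eq_abs]; exact hUb y)⟩
  -- key estimates
  have est : ∀ η : ℝ, 0 < η →
      (∑ i ∈ Finset.range n, (Su i - sl i) * Δ) ≤ 2 * ε + 2 * η * (b - a) ∧
      |(∑ i ∈ Finset.range n, sl i * Δ) - I| ≤ ε + η * (b - a) := by
    intro η hη
    have exu : ∀ i, i < n → ∃ u, u ∈ Icc (x i) (x (i + 1)) ∧ Su i - η < f u := by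
      intro i hi
      obtain ⟨z, hz, hz'⟩ := exists_lt_of_lt_csSup (hne i hi) (sub_lt_self _ hη)
      obtain ⟨w, hw, rfl⟩ := hz
      exact ⟨w, hw, hz'⟩
    have exv : ∀ i, i < n → ∃ v, v ∈ Icc (x i) (x (i + 1)) ∧ f v < sl i + η := by
      intro i hi
      obtain ⟨z, hz, hz'⟩ := exists_lt_of_csInf_lt (hne i hi) (lt_add_of_pos_right _ hη)
      obtain ⟨w, hw, rfl⟩ := hz
      exact ⟨w, hw, hz'⟩
    choose u hu1 hu2 using exu
    choose v hv1 hv2 using exv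
    set u' : ℕ → ℝ := fun i => if h : i < n then u i h else x i with hu'def
    set v' : ℕ → ℝ := fun i => if h : i < n then v i h else x i with hv'def
    have hu'tag : ∀ i < n, u' i ∈ Icc (x i) (x (i + 1)) := by
      intro i hi; simp only [hu'def, dif_pos hi]; exact hu1 i hi
    have hv'tag : ∀ i < n, v' i ∈ Icc (x i) (x (i + 1)) := by
      intro i hi; simp only [hv'def, dif_pos hi]; exact hv1 i hi
    have h1 := H n x u' hx0 hxn hmono hmesh hu'tag
    have h2 := H n x v' hx0 hxn hmono hmesh hv'tag
    rw [show (∑ i ∈ Finset.range n, f (u' i) * (x (i + 1) - x i))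
        = ∑ i ∈ Finset.range n, f (u' i) * Δ from
      Finset.sum_congr rfl fun i _ => by rw [hstep i]] at h1
    rw [show (∑ i ∈ Finset.range n, f (v' i) * (x (i + 1) - x i))
        = ∑ i ∈ Finset.range n, f (v' i) * Δ from
      Finset.sum_congr rfl fun i _ => by rw [hstep i]] at h2
    have hu2' : ∀ i < n, Su i ≤ f (u' i) + η := by
      intro i hi; simp only [hu'def, dif_pos hi]; linarith [hu2 i hi]
    have hv2' : ∀ i < n, f (v' i) - η ≤ sl i := by
      intro i hi; simp only [hv'def, dif_pos hi]; linarith [hv2 i hi]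
    have hv2'' : ∀ i < n, sl i ≤ f (v' i) := by
      intro i hi; simp only [hv'def, dif_pos hi]; exact hfge i hi _ (hv1 i hi)
    constructor
    · have term : ∀ i ∈ Finset.range n,
          (Su i - sl i) * Δ ≤ (f (u' i) - f (v' i) + 2 * η) * Δ := by
        intro i hi
        have hi' := Finset.mem_range.1 hi
        have := hu2' i hi'
        have := hv2' i hi'
        nlinarith [hΔ.le]
      calc (∑ i ∈ Finset.range n, (Su i - sl i) * Δ)
          ≤ ∑ i ∈ Finset.range n, (f (u' i) - f (v' i) + 2 * η) * Δ :=
            Finset.sum_le_sum term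
        _ = (∑ i ∈ Finset.range n, f (u' i) * Δ)
            - (∑ i ∈ Finset.range n, f (v' i) * Δ) + n * (2 * η * Δ) := by
            have e : ∀ i : ℕ, (f (u' i) - f (v' i) + 2 * η) * Δ
                = f (u' i) * Δ - f (v' i) * Δ + 2 * η * Δ := fun i => by ring
            simp_rw [e]
            rw [Finset.sum_add_distrib, Finset.sum_sub_distrib, Finset.sum_const,
              Finset.card_range, nsmul_eq_mul]
        _ ≤ 2 * ε + 2 * η * (b - a) := by
            have := abs_lt.1 h1
            have := abs_lt.1 h2
            nlinarith [hnΔ]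
    · have hclose : |(∑ i ∈ Finset.range n, sl i * Δ)
          - (∑ i ∈ Finset.range n, f (v' i) * Δ)| ≤ η * (b - a) := by
        rw [← Finset.sum_sub_distrib]
        calc |∑ i ∈ Finset.range n, (sl i * Δ - f (v' i) * Δ)|
            ≤ ∑ i ∈ Finset.range n, |sl i * Δ - f (v' i) * Δ| :=
              Finset.abs_sum_le_sum_abs _ _
          _ ≤ ∑ i ∈ Finset.range n, η * Δ := by
              refine Finset.sum_le_sum fun i hi => ?_
              have hi' := Finset.mem_range.1 hi
              rw [show sl i * Δ - f (v' i) * Δ = (sl i - f (v' i)) * Δ by ring, abs_mul,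
                abs_of_pos hΔ]
              have h3 := hv2' i hi'
              have h4 := hv2'' i hi'
              have : |sl i - f (v' i)| ≤ η := abs_le.2 ⟨by linarith, by linarith⟩
              nlinarith [hΔ.le]
          _ = n * (η * Δ) := by rw [Finset.sum_const, Finset.card_range]; simp [nsmul_eq_mul]
          _ = η * (b - a) := by rw [← hnΔ]; ring
      have := abs_lt.1 h2
      have h5 := abs_sub_abs_le_abs_sub ((∑ i ∈ Finset.range n, sl i * Δ) - I)
        ((∑ i ∈ Finset.range n, f (v' i) * Δ) - I)
      have h6 : |(∑ i ∈ Finset.range n, sl i * Δ) - I|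
          ≤ |(∑ i ∈ Finset.range n, sl i * Δ) - (∑ i ∈ Finset.range n, f (v' i) * Δ)|
            + |(∑ i ∈ Finset.range n, f (v' i) * Δ) - I| := by
        exact abs_sub_le _ _ _
      linarith [abs_lt.1 h2, hclose, h6]
  refine ⟨L, U, hmL, hmU, hLb, hUb, hsand, hLU, ?_, ?_⟩
  · rw [integral_sub hintegU hintegL, hintU, hintL, ← Finset.sum_sub_distrib]
    have e : (∑ i ∈ Finset.range n, (Su i * Δ - sl i * Δ))
        = ∑ i ∈ Finset.range n, (Su i - sl i) * Δ :=
      Finset.sum_congr rfl fun i _ => by ring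
    rw [e]
    refine le_of_forall_pos_le_add fun c hc => ?_
    have h := (est (c / (2 * (b - a))) (div_pos hc (by linarith))).1
    have hba : b - a ≠ 0 := by linarith
    calc (∑ i ∈ Finset.range n, (Su i - sl i) * Δ)
        ≤ 2 * ε + 2 * (c / (2 * (b - a))) * (b - a) := h
      _ = 2 * ε + c := by field_simp
  · rw [hintL]
    refine le_of_forall_pos_le_add fun c hc => ?_
    have h := (est (c / (b - a)) (div_pos hc (by linarith))).2
    have hba : b - a ≠ 0 := by linarith
    calc |(∑ i ∈ Finset.range n, sl i * Δ) - I|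
        ≤ ε + c / (b - a) * (b - a) := h
      _ = ε + c := by field_simp

/-- The Lebesgue integral extends the Riemann integral. -/
theorem lebesgue_extends_riemann
    (a b : ℝ) (hab : a < b) (f : ℝ → ℝ) (I : ℝ)
    (hf : RiemannIntegralOn f a b I) :
    IntegrableOn f (Icc a b) volume ∧ ∫ x in Icc a b, f x ∂volume = I := by
  obtain ⟨M, hM, hMb⟩ := RE_bound hab hf
  have happrox : ∀ n : ℕ, ∃ L U : ℝ → ℝ, Measurable L ∧ Measurable U ∧
      (∀ y, |L y| ≤ M) ∧ (∀ y, |U y| ≤ M) ∧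
      (∀ y ∈ Ico a b, L y ≤ f y ∧ f y ≤ U y) ∧
      (∀ y, L y ≤ U y) ∧
      (∫ y in Icc a b, (U y - L y)) ≤ 2 * ((n:ℝ) + 1)⁻¹ ∧
      |(∫ y in Icc a b, L y) - I| ≤ ((n:ℝ) + 1)⁻¹ :=
    fun n => RE_approx hab hf hM hMb (by positivity)
  choose L U hmL hmU hLb hUb hsand hLU hdiff hIL using happrox
  set G : ℝ → ℝ := fun y => ⨆ n, L n y with hGdef
  set Hh : ℝ → ℝ := fun y => ⨅ n, U n y with hHdef
  have hmG : Measurable G := Measurable.iSup hmL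
  have hmH : Measurable Hh := Measurable.iInf hmU
  have hbA : ∀ y, BddAbove (range fun n => L n y) := fun y =>
    ⟨M, by rintro - ⟨n, rfl⟩; exact (abs_le.1 (hLb n y)).2⟩
  have hbB : ∀ y, BddBelow (range fun n => U n y) := fun y =>
    ⟨-M, by rintro - ⟨n, rfl⟩; exact (abs_le.1 (hUb n y)).1⟩
  have hGb : ∀ y, |G y| ≤ M := by
    intro y
    refine abs_le.2 ⟨?_, ciSup_le fun n => (abs_le.1 (hLb n y)).2⟩
    exact le_trans (abs_le.1 (hLb 0 y)).1 (le_ciSup (hbA y) 0)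
  have hLG : ∀ n y, L n y ≤ G y := fun n y => le_ciSup (hbA y) n
  have hHU : ∀ n y, Hh y ≤ U n y := fun n y => ciInf_le (hbB y) n
  have haeIco : ∀ᵐ y ∂(volume.restrict (Icc a b)), y ∈ Ico a b := by
    have h1 : ∀ᵐ y ∂(volume.restrict (Icc a b)), y ∈ Icc a b :=
      ae_restrict_mem measurableSet_Icc
    have h2 : ∀ᵐ y ∂(volume : Measure ℝ), y ≠ b := by
      rw [ae_iff]
      have : {y : ℝ | ¬ y ≠ b} = {b} := by ext y; simp
      rw [this]
      exact Real.volume_singleton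
    have h2' : ∀ᵐ y ∂(volume.restrict (Icc a b)), y ≠ b :=
      Filter.Eventually.filter_mono (ae_mono Measure.restrict_le_self) h2
    filter_upwards [h1, h2'] with y hy hne
    exact ⟨hy.1, lt_of_le_of_ne hy.2 hne⟩
  have hGf : ∀ᵐ y ∂(volume.restrict (Icc a b)), G y ≤ f y := by
    filter_upwards [haeIco] with y hy
    exact ciSup_le fun n => (hsand n y hy).1
  have hfH : ∀ᵐ y ∂(volume.restrict (Icc a b)), f y ≤ Hh y := by
    filter_upwards [haeIco] with y hy
    exact le_ciInf fun n => (hsand n y hy).2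
  have hintLn : ∀ n, IntegrableOn (L n) (Icc a b) volume := fun n =>
    ⟨(hmL n).aestronglyMeasurable, HasFiniteIntegral.of_bounded (C := M)
      (Filter.Eventually.of_forall fun y => by rw [Real.norm_eq_abs]; exact hLb n y)⟩
  have hintUn : ∀ n, IntegrableOn (U n) (Icc a b) volume := fun n =>
    ⟨(hmU n).aestronglyMeasurable, HasFiniteIntegral.of_bounded (C := M)
      (Filter.Eventually.of_forall fun y => by rw [Real.norm_eq_abs]; exact hUb n y)⟩
  have key0 : (∫⁻ y in Icc a b, ENNReal.ofReal (Hh y - G y)) = 0 := by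
    have hle : ∀ n : ℕ, (∫⁻ y in Icc a b, ENNReal.ofReal (Hh y - G y))
        ≤ ENNReal.ofReal (2 * ((n:ℝ) + 1)⁻¹) := by
      intro n
      have hintsub : Integrable (fun y => U n y - L n y) (volume.restrict (Icc a b)) :=
        (hintUn n).sub (hintLn n)
      have hnn : 0 ≤ᵐ[volume.restrict (Icc a b)] fun y => U n y - L n y :=
        Filter.Eventually.of_forall fun y => sub_nonneg.2 (hLU n y)
      calc (∫⁻ y in Icc a b, ENNReal.ofReal (Hh y - G y))
          ≤ ∫⁻ y in Icc a b, ENNReal.ofReal (U n y - L n y) := by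
            refine lintegral_mono_ae ?_
            filter_upwards [haeIco] with y _
            exact ENNReal.ofReal_le_ofReal (by linarith [hLG n y, hHU n y])
        _ = ENNReal.ofReal (∫ y in Icc a b, (U n y - L n y)) :=
            (ofReal_integral_eq_lintegral_ofReal hintsub hnn).symm
        _ ≤ ENNReal.ofReal (2 * ((n:ℝ) + 1)⁻¹) := ENNReal.ofReal_le_ofReal (hdiff n)
    refine le_antisymm ?_ (zero_le)
    refine ENNReal.le_of_forall_pos_le_add fun c hc _ => ?_
    obtain ⟨n, hn⟩ := exists_nat_gt (2 / (c : ℝ))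
    have hc' : (0:ℝ) < c := by exact_mod_cast hc
    have h2 : 2 * ((n:ℝ) + 1)⁻¹ ≤ (c : ℝ) := by
      rw [div_lt_iff₀ hc'] at hn
      have hn1 : (0:ℝ) < (n:ℝ) + 1 := by positivity
      rw [mul_inv_le_iff₀ hn1]
      nlinarith
    calc (∫⁻ y in Icc a b, ENNReal.ofReal (Hh y - G y))
        ≤ ENNReal.ofReal (2 * ((n:ℝ) + 1)⁻¹) := hle n
      _ ≤ ENNReal.ofReal (c : ℝ) := ENNReal.ofReal_le_ofReal h2
      _ = (c : ENNReal) := ENNReal.ofReal_coe_nnreal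
      _ = 0 + (c : ENNReal) := (zero_add _).symm
  have hHG : ∀ᵐ y ∂(volume.restrict (Icc a b)), Hh y ≤ G y := by
    have hmint : Measurable fun y => ENNReal.ofReal (Hh y - G y) :=
      (hmH.sub hmG).ennreal_ofReal
    have := (lintegral_eq_zero_iff hmint).1 key0
    filter_upwards [this] with y hy
    have : ENNReal.ofReal (Hh y - G y) = 0 := hy
    have := ENNReal.ofReal_eq_zero.1 this
    linarith
  have hfG : f =ᵐ[volume.restrict (Icc a b)] G := by
    filter_upwards [hGf, hfH, hHG] with y h1 h2 h3
    linarith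
  have hGint : IntegrableOn G (Icc a b) volume :=
    ⟨hmG.aestronglyMeasurable, HasFiniteIntegral.of_bounded (C := M)
      (Filter.Eventually.of_forall fun y => by rw [Real.norm_eq_abs]; exact hGb y)⟩
  have hfint : IntegrableOn f (Icc a b) volume := hGint.congr hfG.symm
  refine ⟨hfint, ?_⟩
  have hbound : ∀ n : ℕ, |(∫ y in Icc a b, f y) - I| ≤ 3 * ((n:ℝ) + 1)⁻¹ := by
    intro n
    have hLf : ∀ᵐ y ∂(volume.restrict (Icc a b)), L n y ≤ f y := by
      filter_upwards [haeIco] with y hy; exact (hsand n y hy).1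
    have hfU : ∀ᵐ y ∂(volume.restrict (Icc a b)), f y ≤ U n y := by
      filter_upwards [haeIco] with y hy; exact (hsand n y hy).2
    have h1 : (∫ y in Icc a b, L n y) ≤ ∫ y in Icc a b, f y :=
      integral_mono_ae (hintLn n) hfint hLf
    have h2 : (∫ y in Icc a b, f y) ≤ ∫ y in Icc a b, U n y :=
      integral_mono_ae hfint (hintUn n) hfU
    have h3 : (∫ y in Icc a b, U n y) - (∫ y in Icc a b, L n y) ≤ 2 * ((n:ℝ) + 1)⁻¹ := by
      have := hdiff n
      rwa [integral_sub (hintUn n) (hintLn n)] at this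
    have h4 := abs_le.1 (hIL n)
    refine abs_le.2 ⟨by linarith, by linarith⟩
  have habs : |(∫ y in Icc a b, f y) - I| ≤ 0 := by
    refine le_of_forall_pos_le_add fun c hc => ?_
    obtain ⟨n, hn⟩ := exists_nat_gt (3 / c)
    have h2 : 3 * ((n:ℝ) + 1)⁻¹ ≤ c := by
      rw [div_lt_iff₀ hc] at hn
      have hn1 : (0:ℝ) < (n:ℝ) + 1 := by positivity
      rw [mul_inv_le_iff₀ hn1]
      nlinarith
    calc |(∫ y in Icc a b, f y) - I| ≤ 3 * ((n:ℝ) + 1)⁻¹ := hbound n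
      _ ≤ c := h2
      _ = 0 + c := (zero_add c).symm
  have := abs_nonneg ((∫ y in Icc a b, f y) - I)
  have : |(∫ y in Icc a b, f y) - I| = 0 := le_antisymm habs this
  have := abs_eq_zero.1 this
  linarith
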